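/- Let 1 < p < ∞ and K ∈ (0,1), and define F(y) = K^{p−1}·((cot_p(Ky))^{p−1} + |cot_p(K(π_p−y))|^{p−2}·cot_p(K(π_p−y))) for y ∈ (0,π_p/2]. Then F(y) > F(π_p/2) = 2·K^{p−1}·(cot_p(K·π_p/2))^{p−1} for every y ∈ (0,π_p/2); in particular the minimum of F on (0,π_p/2] is attained exactly at y = π_p/2. -/

import Mathlib

/-- `arcsin_p x = ∫₀ˣ (1 - tᵖ)^(-1/p) dt`. -/
noncomputable def arcsinP (p x : ℝ) : ℝ := ∫ t in (0:ℝ)..x, (1 - t ^ p) ^ (-(1 / p))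

/-- The generalized π: `π_p = 2 arcsin_p 1`. -/
noncomputable def piP (p : ℝ) : ℝ := 2 * arcsinP p 1

/-- `sin_p` on `[0, π_p/2]`, defined as the inverse of `arcsin_p : [0,1] → [0, π_p/2]`. -/
noncomputable def sinPHalf (p : ℝ) : ℝ → ℝ := Function.invFunOn (arcsinP p) (Set.Icc 0 1)

/-- `sin_p` on `[0, π_p]`, extended by `sin_p x = sin_p (π_p - x)`. -/
noncomputable def sinP (p x : ℝ) : ℝ :=
  if x ≤ piP p / 2 then sinPHalf p x else sinPHalf p (piP p - x)

/-- `cos_p x = (1 - sin_p x ^ p)^(1/p)` on `[0, π_p/2]`, with minus sign on `[π_p/2, π_p]`. -/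
noncomputable def cosP (p x : ℝ) : ℝ :=
  if x ≤ piP p / 2 then (1 - sinP p x ^ p) ^ (1 / p)
  else -((1 - sinP p x ^ p) ^ (1 / p))

/-- `cot_p x = cos_p x / sin_p x`. -/
noncomputable def cotP (p x : ℝ) : ℝ := cosP p x / sinP p x

open Set Filter MeasureTheory Topology

namespace PGen

variable {p : ℝ}

lemma base_pos (hp : 1 < p) {t : ℝ} (h0 : 0 ≤ t) (h1 : t < 1) : 0 < 1 - t ^ p := by
  have : t ^ p < 1 := Real.rpow_lt_one h0 h1 (by linarith)
  linarith

lemma itg_pos (hp : 1 < p) {t : ℝ} (h0 : 0 ≤ t) (h1 : t < 1) :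
    0 < (1 - t ^ p) ^ (-(1 / p)) :=
  Real.rpow_pos_of_pos (base_pos hp h0 h1) _

lemma itg_contAt (hp : 1 < p) {t : ℝ} (h0 : 0 ≤ t) (h1 : t < 1) :
    ContinuousAt (fun t : ℝ => (1 - t ^ p) ^ (-(1 / p))) t := by
  have hbase : ContinuousAt (fun t : ℝ => 1 - t ^ p) t :=
    (continuous_const.sub (Real.continuous_rpow_const (by linarith : (0:ℝ) ≤ p))).continuousAt
  exact hbase.rpow_const (Or.inl (base_pos hp h0 h1).ne')

lemma itg_intble (hp : 1 < p) :
    IntervalIntegrable (fun t : ℝ => (1 - t ^ p) ^ (-(1 / p))) volume 0 1 := by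
  have hp0 : (0:ℝ) < p := by linarith
  have hexp : (-1:ℝ) < -(1/p) := by
    have h1 : 1/p < 1 := by rw [div_lt_one hp0]; exact hp
    linarith
  have hg0 : IntervalIntegrable (fun t : ℝ => t ^ (-(1/p))) volume 0 1 :=
    intervalIntegral.intervalIntegrable_rpow' hexp
  have hg : IntervalIntegrable (fun t : ℝ => (1 - t) ^ (-(1/p))) volume 0 1 := by
    have h := (hg0.comp_sub_left 1).symm
    norm_num at h
    simpa [one_div] using h
  have hmeas : AEStronglyMeasurable (fun t : ℝ => (1 - t ^ p) ^ (-(1/p)))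
      (volume.restrict (Set.uIoc (0:ℝ) 1)) := by
    rw [Set.uIoc_of_le (by norm_num : (0:ℝ) ≤ 1),
      ← Measure.restrict_congr_set Ioo_ae_eq_Ioc]
    refine ContinuousOn.aestronglyMeasurable (fun t ht => ?_) measurableSet_Ioo
    exact (itg_contAt hp ht.1.le ht.2).continuousWithinAt
  refine hg.mono_fun hmeas ?_
  rw [Set.uIoc_of_le (by norm_num : (0:ℝ) ≤ 1), Filter.EventuallyLE,
    ae_restrict_iff' measurableSet_Ioc]
  refine ae_of_all _ (fun t ht => ?_)
  rcases eq_or_lt_of_le ht.2 with h1 | h1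
  · subst h1
    rw [Real.one_rpow, sub_self, Real.zero_rpow (neg_ne_zero.mpr (one_div_ne_zero hp0.ne'))]
  · have h2 : 0 < t := ht.1
    have h3 : t ^ p ≤ t := by
      calc t ^ p ≤ t ^ (1:ℝ) := Real.rpow_le_rpow_of_exponent_ge h2 h1.le (by linarith)
        _ = t := Real.rpow_one t
    have h4 : 0 < 1 - t := by linarith
    have h5 : 1 - t ≤ 1 - t ^ p := by linarith
    rw [Real.norm_eq_abs, Real.norm_eq_abs,
      abs_of_nonneg (Real.rpow_nonneg (by linarith) _),
      abs_of_nonneg (Real.rpow_nonneg h4.le _)]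
    exact Real.rpow_le_rpow_of_nonpos h4 h5 (neg_nonpos.mpr (le_of_lt (one_div_pos.mpr hp0)))

lemma itg_intble_sub (hp : 1 < p) {a b : ℝ} (ha : a ∈ Icc (0:ℝ) 1) (hb : b ∈ Icc (0:ℝ) 1) :
    IntervalIntegrable (fun t : ℝ => (1 - t ^ p) ^ (-(1 / p))) volume a b := by
  refine (itg_intble hp).mono_set ?_
  rw [Set.uIcc_of_le (by norm_num : (0:ℝ) ≤ 1)]
  exact Set.uIcc_subset_Icc ha hb

lemma arcsinP_zero : arcsinP p 0 = 0 := by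
  unfold arcsinP; exact intervalIntegral.integral_same

lemma arcsinP_strictMonoOn (hp : 1 < p) : StrictMonoOn (arcsinP p) (Icc 0 1) := by
  intro x hx y hy hxy
  have h1 : IntervalIntegrable (fun t : ℝ => (1 - t ^ p) ^ (-(1/p))) volume 0 x :=
    itg_intble_sub hp (left_mem_Icc.mpr (by norm_num)) hx
  have h2 : IntervalIntegrable (fun t : ℝ => (1 - t ^ p) ^ (-(1/p))) volume x y :=
    itg_intble_sub hp hx hy
  have key : arcsinP p x + ∫ t in x..y, (1 - t ^ p) ^ (-(1/p)) = arcsinP p y :=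
    intervalIntegral.integral_add_adjacent_intervals h1 h2
  have hpos : 0 < ∫ t in x..y, (1 - t ^ p) ^ (-(1/p)) :=
    intervalIntegral.intervalIntegral_pos_of_pos_on h2
      (fun t ht => itg_pos hp (le_trans hx.1 ht.1.le) (lt_of_lt_of_le ht.2 hy.2)) hxy
  linarith

lemma arcsinP_continuousOn (hp : 1 < p) : ContinuousOn (arcsinP p) (Icc 0 1) := by
  have h : IntegrableOn (fun t : ℝ => (1 - t ^ p) ^ (-(1/p))) (Set.uIcc (0:ℝ) 1) volume := by
    rw [Set.uIcc_of_le (by norm_num : (0:ℝ) ≤ 1), integrableOn_Icc_iff_integrableOn_Ioc]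
    have := (itg_intble hp).def'
    rwa [Set.uIoc_of_le (by norm_num : (0:ℝ) ≤ 1)] at this
  have := intervalIntegral.continuousOn_primitive_interval (a := (0:ℝ)) (b := 1) h
  rwa [Set.uIcc_of_le (by norm_num : (0:ℝ) ≤ 1)] at this

lemma arcsinP_one_pos (hp : 1 < p) : 0 < arcsinP p 1 := by
  have := intervalIntegral.intervalIntegral_pos_of_pos_on (itg_intble hp)
    (fun t ht => itg_pos hp ht.1.le ht.2) one_pos
  exact this

lemma piP_pos (hp : 1 < p) : 0 < piP p := by
  have := arcsinP_one_pos hp; unfold piP; linarith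

lemma arcsinP_one : arcsinP p 1 = piP p / 2 := by unfold piP; ring

lemma arcsinP_hasDerivAt (hp : 1 < p) {t : ℝ} (ht : t ∈ Ioo (0:ℝ) 1) :
    HasDerivAt (arcsinP p) ((1 - t ^ p) ^ (-(1/p))) t := by
  have hint : IntervalIntegrable (fun u : ℝ => (1 - u ^ p) ^ (-(1/p))) volume 0 t :=
    itg_intble_sub hp (left_mem_Icc.mpr (by norm_num)) ⟨ht.1.le, ht.2.le⟩
  have hcont := itg_contAt hp ht.1.le ht.2
  have hmeas : StronglyMeasurableAtFilter (fun u : ℝ => (1 - u ^ p) ^ (-(1/p))) (𝓝 t) := by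
    refine ⟨Ioo 0 1, Ioo_mem_nhds ht.1 ht.2, ?_⟩
    refine ContinuousOn.aestronglyMeasurable (fun u hu => ?_) measurableSet_Ioo
    exact (itg_contAt hp hu.1.le hu.2).continuousWithinAt
  exact intervalIntegral.integral_hasDerivAt_right hint hmeas hcont

lemma arcsinP_mem (hp : 1 < p) {t : ℝ} (ht : t ∈ Icc (0:ℝ) 1) :
    arcsinP p t ∈ Icc 0 (piP p / 2) := by
  have hm := (arcsinP_strictMonoOn hp).monotoneOn
  constructor
  · have := hm (left_mem_Icc.mpr (by norm_num)) ht ht.1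
    rwa [arcsinP_zero] at this
  · have := hm ht (right_mem_Icc.mpr (by norm_num)) ht.2
    rwa [arcsinP_one] at this

lemma exists_arcsinP_eq (hp : 1 < p) {x : ℝ} (hx : x ∈ Icc 0 (piP p / 2)) :
    ∃ a ∈ Icc (0:ℝ) 1, arcsinP p a = x := by
  have h := intermediate_value_Icc (by norm_num : (0:ℝ) ≤ 1) (arcsinP_continuousOn hp)
  rw [arcsinP_zero, arcsinP_one] at h
  obtain ⟨a, ha, haeq⟩ := h hx
  exact ⟨a, ha, haeq⟩

lemma sinPHalf_mem (hp : 1 < p) {x : ℝ} (hx : x ∈ Icc 0 (piP p / 2)) :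
    sinPHalf p x ∈ Icc (0:ℝ) 1 :=
  Function.invFunOn_mem (exists_arcsinP_eq hp hx)

lemma arcsinP_sinPHalf (hp : 1 < p) {x : ℝ} (hx : x ∈ Icc 0 (piP p / 2)) :
    arcsinP p (sinPHalf p x) = x :=
  Function.invFunOn_eq (exists_arcsinP_eq hp hx)

lemma sinPHalf_arcsinP (hp : 1 < p) {t : ℝ} (ht : t ∈ Icc (0:ℝ) 1) :
    sinPHalf p (arcsinP p t) = t := by
  have hx := arcsinP_mem hp ht
  exact (arcsinP_strictMonoOn hp).injOn (sinPHalf_mem hp hx) ht (arcsinP_sinPHalf hp hx)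

lemma sinPHalf_strictMonoOn (hp : 1 < p) : StrictMonoOn (sinPHalf p) (Icc 0 (piP p / 2)) := by
  intro x hx y hy hxy
  by_contra h
  push_neg at h
  have := (arcsinP_strictMonoOn hp).monotoneOn (sinPHalf_mem hp hy) (sinPHalf_mem hp hx) h
  rw [arcsinP_sinPHalf hp hx, arcsinP_sinPHalf hp hy] at this
  linarith

lemma sinPHalf_half (hp : 1 < p) : sinPHalf p (piP p / 2) = 1 := by
  rw [← arcsinP_one]
  exact sinPHalf_arcsinP hp (right_mem_Icc.mpr (by norm_num))

lemma sinPHalf_mem_Ioo (hp : 1 < p) {x : ℝ} (hx : x ∈ Ioo 0 (piP p / 2)) :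
    sinPHalf p x ∈ Ioo 0 1 := by
  have hx' : x ∈ Icc 0 (piP p / 2) := Ioo_subset_Icc_self hx
  have hs := sinPHalf_mem hp hx'
  have harc := arcsinP_sinPHalf hp hx'
  constructor
  · rcases eq_or_lt_of_le hs.1 with h | h
    · exfalso
      rw [← h, arcsinP_zero] at harc
      exact absurd harc.symm (ne_of_gt hx.1)
    · exact h
  · rcases eq_or_lt_of_le hs.2 with h | h
    · exfalso
      rw [h, arcsinP_one] at harc
      exact absurd harc (ne_of_gt hx.2)
    · exact h

lemma sinPHalf_image_superset (hp : 1 < p) :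
    Icc (0:ℝ) 1 ⊆ sinPHalf p '' (Icc 0 (piP p / 2)) := by
  intro t ht
  exact ⟨arcsinP p t, arcsinP_mem hp ht, sinPHalf_arcsinP hp ht⟩

lemma sinPHalf_contAt (hp : 1 < p) {x : ℝ} (hx : x ∈ Ioo 0 (piP p / 2)) :
    ContinuousAt (sinPHalf p) x := by
  have hs := sinPHalf_mem_Ioo hp hx
  refine (sinPHalf_strictMonoOn hp).continuousAt_of_image_mem_nhds
    (Icc_mem_nhds hx.1 hx.2) ?_
  exact Filter.mem_of_superset (Icc_mem_nhds hs.1 hs.2) (sinPHalf_image_superset hp)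

lemma sinPHalf_contWithinAt (hp : 1 < p) :
    ContinuousWithinAt (sinPHalf p) (Iic (piP p / 2)) (piP p / 2) := by
  have hπ := piP_pos hp
  refine (sinPHalf_strictMonoOn hp).continuousWithinAt_left_of_image_mem_nhdsWithin
    (Icc_mem_nhdsLE_of_mem ⟨by linarith, le_rfl⟩) ?_
  rw [sinPHalf_half hp]
  exact Filter.mem_of_superset (Icc_mem_nhdsLE_of_mem ⟨one_pos, le_rfl⟩)
    (sinPHalf_image_superset hp)

lemma sinPHalf_hasDerivAt (hp : 1 < p) {x : ℝ} (hx : x ∈ Ioo 0 (piP p / 2)) :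
    HasDerivAt (sinPHalf p) ((1 - sinPHalf p x ^ p) ^ (1/p)) x := by
  have hs := sinPHalf_mem_Ioo hp hx
  have hbase : 0 < 1 - sinPHalf p x ^ p := base_pos hp hs.1.le hs.2
  have hd := arcsinP_hasDerivAt hp hs
  have hne : (1 - sinPHalf p x ^ p) ^ (-(1/p)) ≠ 0 := (Real.rpow_pos_of_pos hbase _).ne'
  have hfg : ∀ᶠ y in 𝓝 x, arcsinP p (sinPHalf p y) = y := by
    filter_upwards [Ioo_mem_nhds hx.1 hx.2] with y hy
    exact arcsinP_sinPHalf hp (Ioo_subset_Icc_self hy)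
  have h := HasDerivAt.of_local_left_inverse (sinPHalf_contAt hp hx) hd hne hfg
  rwa [Real.rpow_neg hbase.le, inv_inv] at h

lemma sinP_of_le {x : ℝ} (h : x ≤ piP p / 2) : sinP p x = sinPHalf p x := if_pos h

lemma sinP_of_gt {x : ℝ} (h : piP p / 2 < x) : sinP p x = sinPHalf p (piP p - x) :=
  if_neg (not_le.mpr h)

lemma sinP_half (hp : 1 < p) : sinP p (piP p / 2) = 1 := by
  rw [sinP_of_le le_rfl, sinPHalf_half hp]

lemma sinP_mem_left (hp : 1 < p) {x : ℝ} (hx : x ∈ Ioo 0 (piP p / 2)) :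
    sinP p x ∈ Ioo 0 1 := by
  rw [sinP_of_le hx.2.le]; exact sinPHalf_mem_Ioo hp hx

lemma sinP_mem_right (hp : 1 < p) {x : ℝ} (hx : x ∈ Ioo (piP p / 2) (piP p)) :
    sinP p x ∈ Ioo 0 1 := by
  rw [sinP_of_gt hx.1]
  exact sinPHalf_mem_Ioo hp ⟨by linarith [hx.2], by linarith [hx.1]⟩

lemma sinP_hasDerivAt_left (hp : 1 < p) {x : ℝ} (hx : x ∈ Ioo 0 (piP p / 2)) :
    HasDerivAt (sinP p) ((1 - sinP p x ^ p) ^ (1/p)) x := by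
  have heq : sinP p =ᶠ[𝓝 x] sinPHalf p := by
    filter_upwards [Iio_mem_nhds hx.2] with y hy
    exact sinP_of_le hy.le
  rw [sinP_of_le hx.2.le]
  exact (sinPHalf_hasDerivAt hp hx).congr_of_eventuallyEq heq

lemma sinP_hasDerivAt_right (hp : 1 < p) {x : ℝ} (hx : x ∈ Ioo (piP p / 2) (piP p)) :
    HasDerivAt (sinP p) (-((1 - sinP p x ^ p) ^ (1/p))) x := by
  have hx' : piP p - x ∈ Ioo 0 (piP p / 2) := ⟨by linarith [hx.2], by linarith [hx.1]⟩
  have hinner : HasDerivAt (fun y : ℝ => piP p - y) (-1) x := by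
    simpa using (hasDerivAt_id x).const_sub (piP p)
  have hcomp := (sinPHalf_hasDerivAt hp hx').comp x hinner
  have heq : sinP p =ᶠ[𝓝 x] (sinPHalf p ∘ fun y => piP p - y) := by
    filter_upwards [Ioi_mem_nhds hx.1] with y hy
    exact sinP_of_gt hy
  have h2 := hcomp.congr_of_eventuallyEq heq
  rw [sinP_of_gt hx.1]
  exact h2.congr_deriv (by ring)

lemma sinP_contAt_half (hp : 1 < p) : ContinuousAt (sinP p) (piP p / 2) := by
  have hπ := piP_pos hp
  have hfun : sinP p = fun x => sinPHalf p (min x (piP p - x)) := by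
    funext x
    rcases le_or_gt x (piP p / 2) with h | h
    · rw [sinP_of_le h, min_eq_left (by linarith)]
    · rw [sinP_of_gt h, min_eq_right (by linarith)]
  have hval : min (piP p / 2) (piP p - piP p / 2) = piP p / 2 := by
    rw [show piP p - piP p / 2 = piP p / 2 by ring, min_self]
  have hmin : Tendsto (fun x : ℝ => min x (piP p - x)) (𝓝 (piP p / 2))
      (𝓝[Iic (piP p / 2)] (piP p / 2)) := by
    rw [tendsto_nhdsWithin_iff]
    constructor
    · have hc : Continuous fun x : ℝ => min x (piP p - x) :=
        continuous_id.min (continuous_const.sub continuous_id)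
      have h := hc.tendsto (piP p / 2)
      rwa [hval] at h
    · refine Eventually.of_forall fun x => ?_
      rcases le_total x (piP p - x) with h | h
      · rw [min_eq_left h]; simp only [mem_Iic]; linarith
      · rw [min_eq_right h]; simp only [mem_Iic]; linarith
  have hcomp := (sinPHalf_contWithinAt hp).tendsto.comp hmin
  rw [hfun]
  have hgoal : Tendsto (fun x => sinPHalf p (min x (piP p - x))) (𝓝 (piP p / 2))
      (𝓝 (sinPHalf p (min (piP p / 2) (piP p - piP p / 2)))) := by
    rw [hval]; exact hcomp
  exact hgoal

lemma sinP_lt_sinP (hp : 1 < p) {a b : ℝ} (ha : 0 < a) (hab : a < b)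
    (hsum : a + b < piP p) : sinP p a < sinP p b := by
  have haL : a < piP p / 2 := by linarith
  have hmono := sinPHalf_strictMonoOn hp
  rcases le_or_gt b (piP p / 2) with hbL | hbL
  · rw [sinP_of_le haL.le, sinP_of_le hbL]
    exact hmono ⟨ha.le, haL.le⟩ ⟨by linarith, hbL⟩ hab
  · rw [sinP_of_le haL.le, sinP_of_gt hbL]
    exact hmono ⟨ha.le, haL.le⟩ ⟨by linarith, by linarith⟩ (by linarith)

lemma rpow_collapse (hp : 1 < p) {c : ℝ} (hc : 0 < c) : c ^ (p - 2) * c = c ^ (p - 1) := by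
  nth_rewrite 2 [← Real.rpow_one c]
  rw [← Real.rpow_add hc, show p - 2 + 1 = p - 1 by ring]

lemma signedPow_pos (hp : 1 < p) {c : ℝ} (hc : 0 < c) :
    |c| ^ (p - 2) * c = c ^ (p - 1) := by
  rw [abs_of_pos hc, rpow_collapse hp hc]

lemma cosP_of_le {x : ℝ} (h : x ≤ piP p / 2) :
    cosP p x = (1 - sinP p x ^ p) ^ (1/p) := if_pos h

lemma cosP_of_gt {x : ℝ} (h : piP p / 2 < x) :
    cosP p x = -((1 - sinP p x ^ p) ^ (1/p)) := if_neg (not_le.mpr h)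

lemma cotP_pos_left (hp : 1 < p) {x : ℝ} (hx : x ∈ Ioo 0 (piP p / 2)) :
    0 < cotP p x := by
  have hs := sinP_mem_left hp hx
  have hb := base_pos hp hs.1.le hs.2
  unfold cotP
  rw [cosP_of_le hx.2.le]
  exact div_pos (Real.rpow_pos_of_pos hb _) hs.1

/-- The signed power of the generalized cotangent. -/
noncomputable def Gf (p : ℝ) (x : ℝ) : ℝ := |cotP p x| ^ (p - 2) * cotP p x

lemma Gf_eq_left (hp : 1 < p) {x : ℝ} (hx : x ∈ Ioo 0 (piP p / 2)) :
    Gf p x = (1 - sinP p x ^ p) ^ ((p-1)/p) * sinP p x ^ (-(p-1)) := by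
  have hs := sinP_mem_left hp hx
  have hb := base_pos hp hs.1.le hs.2
  have hcot : cotP p x = (1 - sinP p x ^ p) ^ (1/p) / sinP p x := by
    unfold cotP; rw [cosP_of_le hx.2.le]
  unfold Gf
  rw [signedPow_pos hp (cotP_pos_left hp hx), hcot,
    Real.div_rpow (Real.rpow_nonneg hb.le _) hs.1.le,
    ← Real.rpow_mul hb.le, show 1/p * (p-1) = (p-1)/p by ring,
    Real.rpow_neg hs.1.le, div_eq_mul_inv]

lemma Gf_eq_right (hp : 1 < p) {x : ℝ} (hx : x ∈ Ioo (piP p / 2) (piP p)) :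
    Gf p x = -((1 - sinP p x ^ p) ^ ((p-1)/p) * sinP p x ^ (-(p-1))) := by
  have hs := sinP_mem_right hp hx
  have hb := base_pos hp hs.1.le hs.2
  have hcot : cotP p x = -((1 - sinP p x ^ p) ^ (1/p) / sinP p x) := by
    unfold cotP; rw [cosP_of_gt hx.1]; ring
  have habspos : 0 < (1 - sinP p x ^ p) ^ (1/p) / sinP p x :=
    div_pos (Real.rpow_pos_of_pos hb _) hs.1
  have hcotneg : cotP p x < 0 := by rw [hcot]; linarith
  have habs : |cotP p x| = (1 - sinP p x ^ p) ^ (1/p) / sinP p x := by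
    rw [abs_of_neg hcotneg, hcot, neg_neg]
  unfold Gf
  rw [habs, hcot, mul_neg, rpow_collapse hp habspos,
    Real.div_rpow (Real.rpow_nonneg hb.le _) hs.1.le,
    ← Real.rpow_mul hb.le, show 1/p * (p-1) = (p-1)/p by ring,
    Real.rpow_neg hs.1.le, div_eq_mul_inv]

lemma Gf_half (hp : 1 < p) : Gf p (piP p / 2) = 0 := by
  have hcot : cotP p (piP p / 2) = 0 := by
    unfold cotP
    rw [cosP_of_le le_rfl, sinP_half hp, Real.one_rpow, sub_self,
      Real.zero_rpow (one_div_ne_zero (by linarith : p ≠ 0))]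
    simp
  unfold Gf
  rw [hcot]
  simp

lemma Gf_abs_le (hp : 1 < p) {x : ℝ} (hx : x ∈ Ioo 0 (piP p)) :
    |Gf p x| ≤ (1 - sinP p x ^ p) ^ ((p-1)/p) * sinP p x ^ (-(p-1)) := by
  rcases lt_trichotomy x (piP p / 2) with h | h | h
  · rw [Gf_eq_left hp ⟨hx.1, h⟩]
    have hs := sinP_mem_left hp ⟨hx.1, h⟩
    have hb := base_pos hp hs.1.le hs.2
    rw [abs_of_nonneg (mul_nonneg (Real.rpow_nonneg hb.le _) (Real.rpow_nonneg hs.1.le _))]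
  · rw [h, Gf_half hp, abs_zero]
    have h1 : (0:ℝ) ≤ 1 - sinP p (piP p / 2) ^ p := by
      rw [sinP_half hp, Real.one_rpow]; norm_num
    have h2 : (0:ℝ) ≤ sinP p (piP p / 2) := by rw [sinP_half hp]; norm_num
    exact mul_nonneg (Real.rpow_nonneg h1 _) (Real.rpow_nonneg h2 _)
  · rw [Gf_eq_right hp ⟨h, hx.2⟩, abs_neg]
    have hs := sinP_mem_right hp ⟨h, hx.2⟩
    have hb := base_pos hp hs.1.le hs.2
    rw [abs_of_nonneg (mul_nonneg (Real.rpow_nonneg hb.le _) (Real.rpow_nonneg hs.1.le _))]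

lemma Gf_contAt_half (hp : 1 < p) : ContinuousAt (Gf p) (piP p / 2) := by
  have hπ := piP_pos hp
  have hS := sinP_contAt_half hp
  have hSval : sinP p (piP p / 2) = 1 := sinP_half hp
  have hbound : ContinuousAt
      (fun x => (1 - sinP p x ^ p) ^ ((p-1)/p) * sinP p x ^ (-(p-1))) (piP p / 2) := by
    have h1 : ContinuousAt (fun x => sinP p x ^ p) (piP p / 2) :=
      hS.rpow_const (Or.inl (by rw [hSval]; norm_num))
    have h2 : ContinuousAt (fun x => 1 - sinP p x ^ p) (piP p / 2) :=
      continuousAt_const.sub h1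
    have h3 : ContinuousAt (fun x => (1 - sinP p x ^ p) ^ ((p-1)/p)) (piP p / 2) :=
      h2.rpow_const (Or.inr (le_of_lt (div_pos (by linarith) (by linarith))))
    have h4 : ContinuousAt (fun x => sinP p x ^ (-(p-1))) (piP p / 2) :=
      hS.rpow_const (Or.inl (by rw [hSval]; norm_num))
    exact h3.mul h4
  have hbval : (1 - sinP p (piP p / 2) ^ p) ^ ((p-1)/p) * sinP p (piP p / 2) ^ (-(p-1)) = 0 := by
    rw [hSval, Real.one_rpow, sub_self,
      Real.zero_rpow (div_ne_zero (by linarith : p - 1 ≠ 0) (by linarith : p ≠ 0)), zero_mul]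
  have htend : Tendsto (Gf p) (𝓝 (piP p / 2)) (𝓝 0) := by
    have hb2 : Tendsto (fun x => (1 - sinP p x ^ p) ^ ((p-1)/p) * sinP p x ^ (-(p-1)))
        (𝓝 (piP p / 2)) (𝓝 0) := by
      have := hbound.tendsto
      rwa [hbval] at this
    refine squeeze_zero_norm' ?_ hb2
    filter_upwards [Ioo_mem_nhds (show (0:ℝ) < piP p / 2 by linarith)
      (show piP p / 2 < piP p by linarith)] with x hxd
    rw [Real.norm_eq_abs]
    exact Gf_abs_le hp hxd
  have : Gf p (piP p / 2) = 0 := Gf_half hp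
  unfold ContinuousAt
  rwa [this]

lemma hasDerivAt_form (hp : 1 < p) {s : ℝ → ℝ} {x ε : ℝ} (hε : ε = 1 ∨ ε = -1)
    (h0 : 0 < s x) (h1 : s x < 1)
    (hs : HasDerivAt s (ε * (1 - s x ^ p) ^ (1/p)) x) :
    HasDerivAt (fun z => ε * ((1 - s z ^ p) ^ ((p-1)/p) * s z ^ (-(p-1))))
      (-(p-1) / s x ^ p) x := by
  have hp0 : (0:ℝ) < p := by linarith
  have ha : 0 < 1 - s x ^ p := base_pos hp h0.le h1
  have hsne : s x ≠ 0 := h0.ne'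
  have h_in : HasDerivAt (fun z => s z ^ p)
      ((ε * (1 - s x ^ p) ^ (1/p)) * p * s x ^ (p - 1)) x :=
    hs.rpow_const (Or.inl hsne)
  have h_a : HasDerivAt (fun z => 1 - s z ^ p)
      (-((ε * (1 - s x ^ p) ^ (1/p)) * p * s x ^ (p - 1))) x := by
    exact ((hasDerivAt_const x (1:ℝ)).sub h_in).congr_deriv (by ring)
  have hN : HasDerivAt (fun z => (1 - s z ^ p) ^ ((p-1)/p))
      ((-((ε * (1 - s x ^ p) ^ (1/p)) * p * s x ^ (p - 1))) * ((p-1)/p) *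
        (1 - s x ^ p) ^ ((p-1)/p - 1)) x :=
    h_a.rpow_const (Or.inl ha.ne')
  have hD : HasDerivAt (fun z => s z ^ (-(p-1)))
      ((ε * (1 - s x ^ p) ^ (1/p)) * (-(p-1)) * s x ^ (-(p-1) - 1)) x :=
    hs.rpow_const (Or.inl hsne)
  have hprod := (hN.mul hD).const_mul ε
  refine hprod.congr_deriv (Eq.symm ?_)
  have hw : (0:ℝ) < (1 - s x ^ p) ^ (1/p) := Real.rpow_pos_of_pos ha _
  have hv : (0:ℝ) < s x ^ (p - 1) := Real.rpow_pos_of_pos h0 _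
  have hr : (0:ℝ) < s x ^ p := Real.rpow_pos_of_pos h0 _
  have e1 : (1 - s x ^ p) ^ ((p-1)/p - 1) =
      (1 - s x ^ p) ^ ((p-1)/p) / (1 - s x ^ p) := by
    rw [Real.rpow_sub ha, Real.rpow_one]
  have e2 : s x ^ (-(p-1)) = (s x ^ (p-1))⁻¹ := Real.rpow_neg h0.le _
  have e3 : s x ^ (-(p-1) - 1) = (s x ^ p)⁻¹ := by
    rw [show -(p-1) - 1 = -p by ring, Real.rpow_neg h0.le]
  have e4 : (1 - s x ^ p) ^ ((p-1)/p) = (1 - s x ^ p) / (1 - s x ^ p) ^ (1/p) := by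
    rw [eq_div_iff hw.ne', ← Real.rpow_add ha, show (p-1)/p + 1/p = 1 by field_simp; ring,
      Real.rpow_one]
  rw [e1, e2, e3, e4]
  rcases hε with h | h <;> subst h <;>
    field_simp <;> ring

lemma Gf_hasDerivAt (hp : 1 < p) {x : ℝ} (hx : x ∈ Ioo 0 (piP p))
    (hne : x ≠ piP p / 2) :
    HasDerivAt (Gf p) (-(p-1) / sinP p x ^ p) x := by
  have hπ := piP_pos hp
  rcases lt_or_gt_of_ne hne with hlt | hgt
  · have hx' : x ∈ Ioo 0 (piP p / 2) := ⟨hx.1, hlt⟩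
    have hs := sinP_mem_left hp hx'
    have hd : HasDerivAt (sinP p) ((1:ℝ) * (1 - sinP p x ^ p) ^ (1/p)) x := by
      rw [one_mul]; exact sinP_hasDerivAt_left hp hx'
    have hform := hasDerivAt_form hp (Or.inl rfl) hs.1 hs.2 hd
    refine hform.congr_of_eventuallyEq ?_
    filter_upwards [Ioo_mem_nhds hx'.1 hx'.2] with z hz
    rw [Gf_eq_left hp hz, one_mul]
  · have hx' : x ∈ Ioo (piP p / 2) (piP p) := ⟨hgt, hx.2⟩
    have hs := sinP_mem_right hp hx'
    have hd : HasDerivAt (sinP p) ((-1:ℝ) * (1 - sinP p x ^ p) ^ (1/p)) x := by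
      rw [neg_one_mul]; exact sinP_hasDerivAt_right hp hx'
    have hform := hasDerivAt_form hp (Or.inr rfl) hs.1 hs.2 hd
    refine hform.congr_of_eventuallyEq ?_
    filter_upwards [Ioo_mem_nhds hx'.1 hx'.2] with z hz
    rw [Gf_eq_right hp hz]; ring

end PGen

open Set Filter MeasureTheory Topology PGen

/-- For `K ∈ (0,1)` the function
`F(y) = K^(p-1)((cot_p (K y))^(p-1) + |cot_p (K(π_p - y))|^(p-2) cot_p (K(π_p - y)))`
on `(0, π_p/2]` attains its minimum exactly at `y = π_p/2`, where
`F(π_p/2) = 2 K^(p-1) (cot_p (K π_p/2))^(p-1)`. -/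
theorem F_min_at_half (p K : ℝ) (hp : 1 < p) (hK0 : 0 < K) (hK1 : K < 1)
    (F : ℝ → ℝ)
    (hF : ∀ y, F y = K ^ (p - 1) * ((cotP p (K * y)) ^ (p - 1) +
      |cotP p (K * (piP p - y))| ^ (p - 2) * cotP p (K * (piP p - y)))) :
    F (piP p / 2) = 2 * K ^ (p - 1) * (cotP p (K * piP p / 2)) ^ (p - 1) ∧
    ∀ y ∈ Set.Ioo 0 (piP p / 2), F y > F (piP p / 2) := by
  have hπ := piP_pos hp
  have hp1 : (0:ℝ) < p - 1 := by linarith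
  set L : ℝ := piP p / 2 with hL
  have hL0 : 0 < L := by rw [hL]; linarith
  have hLπ : L < piP p := by rw [hL]; linarith
  have hsigned : ∀ x ∈ Ioo 0 L, |cotP p x| ^ (p - 2) * cotP p x = cotP p x ^ (p - 1) :=
    fun x hx => signedPow_pos hp (cotP_pos_left hp hx)
  have hKL' : ∀ z ∈ Ioc 0 L, K * z ∈ Ioo 0 L := fun z hz =>
    ⟨mul_pos hK0 hz.1, by nlinarith [hz.2]⟩
  have hLhalf : piP p - L = L := by rw [hL]; ring
  have part1 : F L = 2 * K ^ (p - 1) * cotP p (K * piP p / 2) ^ (p - 1) := by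
    rw [hF L, hLhalf, hsigned _ (hKL' L ⟨hL0, le_rfl⟩),
      show K * piP p / 2 = K * L by rw [hL]; ring]
    ring
  refine ⟨part1, ?_⟩
  intro y hy
  set F₀ : ℝ → ℝ := fun y => Gf p (K * y) + Gf p (K * (piP p - y)) with hF₀
  have hFF : ∀ z ∈ Ioc 0 L, F z = K ^ (p - 1) * F₀ z := by
    intro z hz
    rw [hF z, hF₀, ← hsigned _ (hKL' z hz)]
    simp only [Gf]
  have hbmem : ∀ z ∈ Ioc 0 L, K * (piP p - z) ∈ Ioo 0 (piP p) := by
    intro z hz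
    constructor
    · have : z < piP p := lt_of_le_of_lt hz.2 hLπ
      exact mul_pos hK0 (by linarith)
    · nlinarith [hz.1, hz.2]
  set y₀ : ℝ := piP p - L / K with hy₀
  have hy₀L : y₀ < L := by
    rw [hy₀, hL]
    have h1 : piP p / 2 < piP p / 2 / K := by
      rw [lt_div_iff₀ hK0]; nlinarith
    linarith
  have hDeriv : ∀ z ∈ Ioo 0 L, z ≠ y₀ → ∃ d, d < 0 ∧ HasDerivAt F₀ d z := by
    intro z hz hzne
    have hzIoc : z ∈ Ioc 0 L := ⟨hz.1, hz.2.le⟩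
    have hKz : K * z ∈ Ioo 0 L := hKL' z hzIoc
    have hb : K * (piP p - z) ∈ Ioo 0 (piP p) := hbmem z hzIoc
    have hbne : K * (piP p - z) ≠ L := by
      intro h
      apply hzne
      rw [hy₀]
      have : piP p - z = L / K := by
        field_simp at h ⊢
        linarith [h]
      linarith [this]
    have hKzne : K * z ≠ L := ne_of_lt hKz.2
    have hGa := Gf_hasDerivAt hp ⟨hKz.1, lt_trans hKz.2 hLπ⟩ hKzne
    have hGb := Gf_hasDerivAt hp hb hbne
    have hia : HasDerivAt (fun w : ℝ => K * w) K z := by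
      simpa using (hasDerivAt_id z).const_mul K
    have hib : HasDerivAt (fun w : ℝ => K * (piP p - w)) (-K) z := by
      have h := ((hasDerivAt_id z).const_sub (piP p)).const_mul K
      simpa using h
    have h1 := hGa.comp z hia
    have h2 := hGb.comp z hib
    refine ⟨_, ?_, (h1.add h2 : HasDerivAt F₀ _ z)⟩
    have hsin : sinP p (K * z) < sinP p (K * (piP p - z)) := by
      apply sinP_lt_sinP hp hKz.1
      · have : z < piP p - z := by
          have := hz.2; rw [hL] at this; linarith
        exact (mul_lt_mul_iff_right₀ hK0).mpr this
      · have : K * z + K * (piP p - z) = K * piP p := by ring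
        rw [this]; nlinarith
    have hsa : 0 < sinP p (K * z) := (sinP_mem_left hp hKz).1
    have hsb : 0 < sinP p (K * (piP p - z)) := lt_trans hsa hsin
    have hpa : 0 < sinP p (K * z) ^ p := Real.rpow_pos_of_pos hsa p
    have hpb : sinP p (K * z) ^ p < sinP p (K * (piP p - z)) ^ p :=
      Real.rpow_lt_rpow hsa.le hsin (by linarith)
    have hinv : 1 / sinP p (K * (piP p - z)) ^ p < 1 / sinP p (K * z) ^ p :=
      one_div_lt_one_div_of_lt hpa hpb
    have heq : -(p-1) / sinP p (K * z) ^ p * K + -(p-1) / sinP p (K * (piP p - z)) ^ p * (-K)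
        = -(K * (p-1) * (1 / sinP p (K * z) ^ p - 1 / sinP p (K * (piP p - z)) ^ p)) := by
      ring
    rw [heq]
    have hpos : 0 < K * (p-1) * (1 / sinP p (K * z) ^ p
        - 1 / sinP p (K * (piP p - z)) ^ p) :=
      mul_pos (mul_pos hK0 hp1) (sub_pos.mpr hinv)
    linarith
  have hCont : ∀ z ∈ Ioc 0 L, ContinuousAt F₀ z := by
    intro z hz
    have hKz := hKL' z hz
    have hGa := (Gf_hasDerivAt hp ⟨hKz.1, lt_trans hKz.2 hLπ⟩ (ne_of_lt hKz.2)).continuousAt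
    have hinner1 : ContinuousAt (fun w : ℝ => K * w) z :=
      (continuous_const.mul continuous_id).continuousAt
    have c1 : ContinuousAt (fun w : ℝ => Gf p (K * w)) z := hGa.comp hinner1
    have hb := hbmem z hz
    have hGb : ContinuousAt (Gf p) (K * (piP p - z)) := by
      by_cases hbeq : K * (piP p - z) = L
      · rw [hbeq, hL]; exact Gf_contAt_half hp
      · exact (Gf_hasDerivAt hp hb hbeq).continuousAt
    have hinner2 : ContinuousAt (fun w : ℝ => K * (piP p - w)) z :=
      (continuous_const.mul (continuous_const.sub continuous_id)).continuousAt
    have c2 : ContinuousAt (fun w : ℝ => Gf p (K * (piP p - w))) z :=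
      ContinuousAt.comp (f := fun w : ℝ => K * (piP p - w)) (x := z) hGb hinner2
    exact c1.add c2
  have hAnti : ∀ c d : ℝ, c ∈ Ioc 0 L → d ∈ Ioc 0 L → c < d →
      (∀ z ∈ Ioo c d, z ≠ y₀) → F₀ d < F₀ c := by
    intro c d hc hd hcd hno
    have hsub : Icc c d ⊆ Ioc 0 L := fun z hz =>
      ⟨lt_of_lt_of_le hc.1 hz.1, le_trans hz.2 hd.2⟩
    have hanti := strictAntiOn_of_deriv_neg (convex_Icc c d)
      (fun z hz => (hCont z (hsub hz)).continuousWithinAt)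
      (fun z hz => by
        rw [interior_Icc] at hz
        have hzo : z ∈ Ioo 0 L := ⟨lt_trans hc.1 hz.1, lt_of_lt_of_le hz.2 hd.2⟩
        obtain ⟨dd, hdd, hD⟩ := hDeriv z hzo (hno z hz)
        rw [hD.deriv]; exact hdd)
    exact hanti (left_mem_Icc.mpr hcd.le) (right_mem_Icc.mpr hcd.le) hcd
  have hyIoc : y ∈ Ioc 0 L := ⟨hy.1, hy.2.le⟩
  have hLIoc : L ∈ Ioc 0 L := ⟨hL0, le_rfl⟩
  have hmain : F₀ L < F₀ y := by
    rcases le_or_gt y₀ y with hcase | hcase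
    · exact hAnti y L hyIoc hLIoc hy.2 (fun z hz => ne_of_gt (lt_of_le_of_lt hcase hz.1))
    · have hy₀0 : 0 < y₀ := lt_trans hy.1 hcase
      have h1 : F₀ y₀ < F₀ y :=
        hAnti y y₀ hyIoc ⟨hy₀0, hy₀L.le⟩ hcase (fun z hz => ne_of_lt hz.2)
      have h2 : F₀ L < F₀ y₀ :=
        hAnti y₀ L ⟨hy₀0, hy₀L.le⟩ hLIoc hy₀L (fun z hz => ne_of_gt hz.1)
      exact lt_trans h2 h1
  have hKpos : 0 < K ^ (p - 1) := Real.rpow_pos_of_pos hK0 _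
  show F (piP p / 2) < F y
  rw [← hL, hFF y hyIoc, hFF L hLIoc]
  exact (mul_lt_mul_iff_right₀ hKpos).mpr hmain
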